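/- Let Π be a ground normal program and X an answer set. If S is an explanation for p ∈ X (the rule-vertex tree obtained from an explanation tree by contracting atom vertices), then the set of rules labeling the vertices of S, restricted to the reduct Π^X (i.e., {H(r) ← B⁺(r) | r labels a vertex of S}), is itself a program whose least model contains p. In other words, the rules appearing in an explanation suffice to derive p from the facts in the explanation's leaves. -/

import Mathlib

/-- A ground normal rule: head atom, positive body atoms, negative body atoms. -/
structure Rule (α : Type) where
  head : α
  pos : Finset α
  neg : Finset α

/-- `Y` is a model of the reduct `Π^X`. -/
def IsModelOfReduct {α : Type} (P : Set (Rule α)) (X Y : Set α) : Prop :=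
  ∀ r ∈ P, (∀ a ∈ r.neg, a ∉ X) → ↑r.pos ⊆ Y → r.head ∈ Y

/-- `X` is an answer set of `Π`: a subset-minimal model of the reduct `Π^X`. -/
def IsAnswerSet {α : Type} (P : Set (Rule α)) (X : Set α) : Prop :=
  IsModelOfReduct P X X ∧ ∀ Y ⊆ X, IsModelOfReduct P X Y → Y = X

/-- Finite rose trees with vertex labels in `L`; a vertex of a tree is identified
with the subtree hanging from it. -/
inductive RTree (L : Type) : Type
  | node : L → List (RTree L) → RTree L

namespace RTree

def label {L : Type} : RTree L → L
  | node l _ => l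

def children {L : Type} : RTree L → List (RTree L)
  | node _ cs => cs

/-- The list of all vertices (subtree occurrences) of a tree. -/
def occs {L : Type} : RTree L → List (RTree L)
  | node l cs => node l cs :: (cs.attach.map (fun c => occs c.1)).flatten
decreasing_by
  have := List.sizeOf_lt_of_mem c.2
  simp only [RTree.node.sizeOf_spec]; omega

end RTree

/-- The immediate consequence operator of the positive program
`{H(r) ← B⁺(r) | r ∈ Q}` (negative bodies discarded, as in the reduct `Π^X`). -/
def TconsPos {α : Type} (Q : Set (Rule α)) : Set α →o Set α where
  toFun S := {a | ∃ r ∈ Q, r.head = a ∧ ↑r.pos ⊆ S}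
  monotone' := by
    intro S S' h a ha
    obtain ⟨r, hr, hh, hpos⟩ := ha
    exact ⟨r, hr, hh, hpos.trans h⟩

lemma RTree.self_mem_occs {L : Type} (t : RTree L) : t ∈ RTree.occs t := by
  cases t with
  | node l cs => rw [RTree.occs]; exact List.mem_cons_self

lemma RTree.occs_trans {L : Type} (S : RTree L) :
    ∀ t ∈ RTree.occs S, ∀ u ∈ RTree.occs t, u ∈ RTree.occs S := by
  induction S using RTree.occs.induct with
  | _ l cs ih =>
    intro t ht u hu
    rw [RTree.occs] at ht ⊢
    rcases List.mem_cons.1 ht with h | h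
    · subst h; rw [RTree.occs] at hu; exact hu
    · refine List.mem_cons.2 (Or.inr ?_)
      rw [List.mem_flatten] at h ⊢
      obtain ⟨l', hl', htl'⟩ := h
      obtain ⟨c, hc, rfl⟩ := List.mem_map.1 hl'
      exact ⟨RTree.occs c.1, hl', ih c t htl' u hu⟩

lemma RTree.child_mem_occs {L : Type} (t : RTree L) (c : RTree L)
    (hc : c ∈ RTree.children t) : c ∈ RTree.occs t := by
  cases t with
  | node l cs =>
    rw [RTree.occs]
    refine List.mem_cons.2 (Or.inr (List.mem_flatten.2 ⟨RTree.occs c, ?_, RTree.self_mem_occs c⟩))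
    exact List.mem_map.2 ⟨⟨c, hc⟩, List.mem_attach _ _, rfl⟩

lemma derive_aux {α : Type} (S : RTree (Rule α))
    (hchildren : ∀ t ∈ RTree.occs S, ∀ a : α,
      a ∈ (RTree.label t).pos ↔ ∃ c ∈ RTree.children t, (RTree.label c).head = a) :
    ∀ t ∈ RTree.occs S,
      (RTree.label t).head ∈
        OrderHom.lfp (TconsPos {r | ∃ t ∈ RTree.occs S, RTree.label t = r}) := by
  intro t
  induction t using RTree.occs.induct with
  | _ l cs ih =>
    intro ht
    set Q : Set (Rule α) := {r | ∃ t ∈ RTree.occs S, RTree.label t = r} with hQ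
    have hfix := OrderHom.map_lfp (TconsPos Q)
    rw [← hfix]
    refine ⟨RTree.label (RTree.node l cs), ⟨_, ht, rfl⟩, rfl, ?_⟩
    intro a ha
    obtain ⟨c, hc, hhead⟩ := (hchildren _ ht a).1 (by simpa using ha)
    have hcc : c ∈ cs := by simpa [RTree.children] using hc
    have hcS : c ∈ RTree.occs S :=
      RTree.occs_trans S _ ht c (RTree.child_mem_occs _ c hc)
    have := ih ⟨c, hcc⟩ hcS
    rw [hhead] at this
    exact this

/-- The rules appearing in an explanation suffice to derive its root atom: if `S`
is an explanation for `p ∈ X` (a tree of rule vertices in which each rule's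
positive body atoms are exactly the heads of its children rules, the rules come
from `Π` and pass the reduct `Π^X`, and the root rule's head is `p`), then `p`
belongs to the least model — the least fixed point of the immediate consequence
operator — of the positive program `{H(r) ← B⁺(r)}` over the rules labeling the
vertices of `S`. -/
theorem explanation_rules_derive_root {α : Type} (P : Set (Rule α)) (X : Set α)
    (hX : IsAnswerSet P X) (p : α) (hp : p ∈ X)
    (S : RTree (Rule α))
    (hroot : (RTree.label S).head = p)
    (hmem : ∀ t ∈ RTree.occs S, RTree.label t ∈ P)
    (hneg : ∀ t ∈ RTree.occs S, ∀ a ∈ (RTree.label t).neg, a ∉ X)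
    (hchildren : ∀ t ∈ RTree.occs S, ∀ a : α,
      a ∈ (RTree.label t).pos ↔ ∃ c ∈ RTree.children t, (RTree.label c).head = a) :
    p ∈ OrderHom.lfp (TconsPos {r | ∃ t ∈ RTree.occs S, RTree.label t = r}) := by
  have := derive_aux S hchildren S (RTree.self_mem_occs S)
  rwa [hroot] at this
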